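/- arXiv:math/0312376 — 2 statements merged into one kernel-verified Lean document; each statement's English description precedes it below -/
import Mathlib

section
/- For every real μ with μ > γ and every x ∈ ℂ^n, one has μ²·x*Mx + μ·x*Cx + x*Kx ≥ (μ − γ)²·x*Mx; in particular the Hermitian matrix K(μ) = μ²M + μC + K is positive definite for every real μ > γ. -/
open Matrix
open scoped ComplexOrder

noncomputable section

/-- The value `x* P x` (which is real for Hermitian `P`), taken as its real part. -/
def qf {n : ℕ} (P : Matrix (Fin n) (Fin n) ℂ) (x : Fin n → ℂ) : ℝ :=
  (star x ⬝ᵥ P.mulVec x).re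

/-- The (positive semidefinite) square root of a positive semidefinite matrix,
extended by `0` to all matrices. -/
def msqrt {n : ℕ} (P : Matrix (Fin n) (Fin n) ℂ) : Matrix (Fin n) (Fin n) ℂ :=
  open scoped Classical in
  if h : P.PosSemidef then
    h.1.eigenvectorUnitary.1 * diagonal ((↑) ∘ (√·) ∘ h.1.eigenvalues) *
      (star h.1.eigenvectorUnitary : Matrix (Fin n) (Fin n) ℂ)
  else 0

/-- The quadratic matrix pencil `K(λ) = λ²M + λC + K`. -/
def Kpen {n : ℕ} (M C K : Matrix (Fin n) (Fin n) ℂ) (lam : ℂ) :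
    Matrix (Fin n) (Fin n) ℂ :=
  lam ^ 2 • M + lam • C + K

/-- The real part of the `+`-root of the scalar quadratic
`m(x) λ² + c(x) λ + k(x) = 0`. -/
def rfun {n : ℕ} (M C K : Matrix (Fin n) (Fin n) ℂ) (x : Fin n → ℂ) : ℝ :=
  open scoped Classical in
  if (qf C x) ^ 2 ≥ 4 * qf M x * qf K x then
    (-(qf C x) + Real.sqrt ((qf C x) ^ 2 - 4 * qf M x * qf K x)) / (2 * qf M x)
  else
    -(qf C x) / (2 * qf M x)

/-- The spectral-shift bound `γ = sup_{x ≠ 0} Re p₊(x)`. -/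
def gam {n : ℕ} (M C K : Matrix (Fin n) (Fin n) ℂ) : ℝ :=
  sSup {y : ℝ | ∃ x : Fin n → ℂ, x ≠ 0 ∧ rfun M C K x = y}

/-- The phase-space matrix `A = [[0, K½ M⁻½], [−M⁻½ K½, −M⁻½ C M⁻½]]`. -/
def phaseA {n : ℕ} (M C K : Matrix (Fin n) (Fin n) ℂ) :
    Matrix (Fin n ⊕ Fin n) (Fin n ⊕ Fin n) ℂ :=
  fromBlocks 0 (msqrt K * (msqrt M)⁻¹)
    (-((msqrt M)⁻¹ * msqrt K)) (-((msqrt M)⁻¹ * C * (msqrt M)⁻¹))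

/-- The operator norm of a matrix with respect to the Euclidean norm. -/
def opNorm {m : Type*} [Fintype m] [DecidableEq m] (A : Matrix m m ℂ) : ℝ :=
  ‖toEuclideanCLM (𝕜 := ℂ) A‖

/-- The block matrix `L(μ) = [[K½ K(μ)⁻½, 0], [μ M½ K(μ)⁻½, I]]`. -/
def Lmat {n : ℕ} (M C K : Matrix (Fin n) (Fin n) ℂ) (mu : ℝ) :
    Matrix (Fin n ⊕ Fin n) (Fin n ⊕ Fin n) ℂ :=
  fromBlocks (msqrt K * (msqrt (Kpen M C K (mu : ℂ)))⁻¹) 0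
    ((mu : ℂ) • (msqrt M * (msqrt (Kpen M C K (mu : ℂ)))⁻¹)) 1

lemma qf_pos {n : ℕ} {P : Matrix (Fin n) (Fin n) ℂ} (hP : P.PosDef)
    {x : Fin n → ℂ} (hx : x ≠ 0) : 0 < qf P x := by
  have h := hP.dotProduct_mulVec_pos hx
  rw [Complex.lt_def] at h
  simpa [qf] using h.1

lemma qf_im_eq_zero {n : ℕ} {P : Matrix (Fin n) (Fin n) ℂ} (hP : P.PosDef)
    {x : Fin n → ℂ} (hx : x ≠ 0) : (star x ⬝ᵥ P.mulVec x).im = 0 := by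
  have h := hP.dotProduct_mulVec_pos hx
  rw [Complex.lt_def] at h
  simpa using h.2.symm

lemma rfun_neg {n : ℕ} {M C K : Matrix (Fin n) (Fin n) ℂ}
    (hM : M.PosDef) (hC : C.PosDef) (hK : K.PosDef)
    {x : Fin n → ℂ} (hx : x ≠ 0) : rfun M C K x < 0 := by
  have hm := qf_pos hM hx
  have hc := qf_pos hC hx
  have hk := qf_pos hK hx
  unfold rfun
  split_ifs with h
  · apply div_neg_of_neg_of_pos _ (by linarith)
    have hlt : Real.sqrt ((qf C x) ^ 2 - 4 * qf M x * qf K x) < qf C x := by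
      have : (qf C x) ^ 2 - 4 * qf M x * qf K x < (qf C x)^2 := by nlinarith
      calc Real.sqrt ((qf C x) ^ 2 - 4 * qf M x * qf K x)
          < Real.sqrt ((qf C x)^2) := Real.sqrt_lt_sqrt (by linarith) this
        _ = qf C x := by rw [Real.sqrt_sq hc.le]
    linarith
  · apply div_neg_of_neg_of_pos (by linarith) (by linarith)

lemma rfun_bound {n : ℕ} {M C K : Matrix (Fin n) (Fin n) ℂ}
    (hM : M.PosDef) (hC : C.PosDef) (hK : K.PosDef)
    {x : Fin n → ℂ} (hx : x ≠ 0) {mu : ℝ} (hmu : rfun M C K x ≤ mu) :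
    qf M x * (mu - rfun M C K x)^2 ≤ mu^2 * qf M x + mu * qf C x + qf K x := by
  have hm := qf_pos hM hx
  have hc := qf_pos hC hx
  have hk := qf_pos hK hx
  unfold rfun at hmu ⊢
  set m := qf M x; set c := qf C x; set k := qf K x
  split_ifs at hmu ⊢ with h
  · set s := Real.sqrt (c ^ 2 - 4 * m * k) with hs
    have hs0 : 0 ≤ s := Real.sqrt_nonneg _
    have hs2 : s^2 = c^2 - 4*m*k := Real.sq_sqrt (by linarith)
    set r := (-c + s) / (2*m) with hr
    have h2m : 2*m*r = -c + s := by rw [hr]; field_simp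
    have hid : m*r^2 + c*r + k = 0 := by nlinarith [h2m, hs2, mul_pos hm hm]
    have hprod : 0 ≤ (mu - r) * (2*m*r + c) := by
      apply mul_nonneg (by simpa [hr] using sub_nonneg.mpr hmu) (by linarith)
    nlinarith [hid, hprod]
  · set r := -c / (2*m) with hr
    have h2m : 2*m*r = -c := by rw [hr]; field_simp
    have h4 : 4*(m*(m*r^2)) = c^2 := by nlinarith [h2m]
    have h3 : mu*(2*m*r) = mu*(-c) := by rw [h2m]
    have hkr : m*r^2 ≤ k := by nlinarith [h4, hm, mul_pos hm hm]
    nlinarith [h3, hkr, hm]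

lemma qf_coe {n : ℕ} {P : Matrix (Fin n) (Fin n) ℂ} (hP : P.PosDef)
    {x : Fin n → ℂ} (hx : x ≠ 0) :
    star x ⬝ᵥ P.mulVec x = (qf P x : ℂ) := by
  refine Complex.ext ?_ ?_
  · simp [qf]
  · simp [qf_im_eq_zero hP hx]

/-- For every real `μ > γ` and every `x`, the shifted quadratic form is bounded
below by `(μ − γ)² x*Mx`; in particular `K(μ)` is positive definite. -/
theorem Kmu_posDef_of_gt_gamma {n : ℕ} (hn : 1 ≤ n)
    (M C K : Matrix (Fin n) (Fin n) ℂ)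
    (hM : M.PosDef) (hC : C.PosDef) (hK : K.PosDef) :
    ∀ mu : ℝ, gam M C K < mu →
      (∀ x : Fin n → ℂ,
        mu ^ 2 * qf M x + mu * qf C x + qf K x ≥ (mu - gam M C K) ^ 2 * qf M x) ∧
      (Kpen M C K (mu : ℂ)).PosDef := by
  have hbdd : BddAbove {y : ℝ | ∃ x : Fin n → ℂ, x ≠ 0 ∧ rfun M C K x = y} := by
    refine ⟨0, ?_⟩
    rintro y ⟨x, hx, rfl⟩
    exact (rfun_neg hM hC hK hx).le
  intro mu hmu
  have key : ∀ x : Fin n → ℂ,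
      mu ^ 2 * qf M x + mu * qf C x + qf K x ≥ (mu - gam M C K) ^ 2 * qf M x := by
    intro x
    by_cases hx : x = 0
    · simp [hx, qf]
    · have hm := qf_pos hM hx
      have hr : rfun M C K x ≤ gam M C K := le_csSup hbdd ⟨x, hx, rfl⟩
      have hb := rfun_bound hM hC hK hx (mu := mu) (by linarith)
      have h2 : (mu - gam M C K)^2 ≤ (mu - rfun M C K x)^2 := by
        have h1 : 0 ≤ mu - gam M C K := by linarith
        nlinarith
      nlinarith [mul_le_mul_of_nonneg_left h2 hm.le]
  refine ⟨key, Matrix.PosDef.of_dotProduct_mulVec_pos ?_ ?_⟩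
  · show ((mu:ℂ)^2 • M + (mu:ℂ) • C + K).IsHermitian
    unfold Matrix.IsHermitian
    rw [conjTranspose_add, conjTranspose_add, conjTranspose_smul, conjTranspose_smul,
      hM.1, hC.1, hK.1, ← Complex.ofReal_pow, Complex.star_def, Complex.conj_ofReal,
      Complex.conj_ofReal, Complex.ofReal_pow]
  · intro x hx
    have hq : star x ⬝ᵥ (Kpen M C K (mu:ℂ)).mulVec x
        = ((mu^2 * qf M x + mu * qf C x + qf K x : ℝ) : ℂ) := by
      simp only [Kpen, add_mulVec, smul_mulVec, dotProduct_add, dotProduct_smul,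
        smul_eq_mul, qf_coe hM hx, qf_coe hC hx, qf_coe hK hx]
      push_cast
      ring
    rw [hq, Complex.zero_lt_real]
    have hm := qf_pos hM hx
    have := key x
    nlinarith [sq_nonneg (mu - gam M C K), mul_pos (pow_pos (by linarith : (0:ℝ) < mu - gam M C K) 2) hm]

end
end

section
/- For every real μ with γ < μ ≤ 0 and every real t ≥ 0, the operator norm of exp(tA) satisfies ‖exp(tA)‖ ≤ ‖L(μ)‖ · ‖L(μ)^{-1}‖ · e^{μt}, where L(μ) = [[K^{1/2}K(μ)^{-1/2}, 0], [μ M^{1/2}K(μ)^{-1/2}, I]]. -/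
open Matrix
open scoped ComplexOrder

noncomputable section

/-! ### Auxiliary lemmas -/

section Aux

open scoped InnerProductSpace

/-! #### Scalar quadratic lemmas -/

private lemma quad_pos_of_rfun_lt {n : ℕ} (M C K : Matrix (Fin n) (Fin n) ℂ)
    (x : Fin n → ℂ) (mu : ℝ) (hm : 0 < qf M x) (hk : 0 < qf K x)
    (h : rfun M C K x < mu) : 0 < mu^2 * qf M x + mu * qf C x + qf K x := by
  set m := qf M x; set c := qf C x; set k := qf K x
  rw [rfun] at h
  split at h
  · next hD =>
    have h1 : -c + Real.sqrt (c^2-4*m*k) < mu * (2*m) := (div_lt_iff₀ (by positivity)).mp h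
    have hsn : 0 ≤ Real.sqrt (c^2-4*m*k) := Real.sqrt_nonneg _
    have hsq : Real.sqrt (c^2-4*m*k) ^ 2 = c^2-4*m*k :=
      Real.sq_sqrt (by linarith : (0:ℝ) ≤ c^2-4*m*k)
    nlinarith [sq_nonneg (Real.sqrt (c^2-4*m*k) - (2*m*mu + c))]
  · next hD =>
    push_neg at hD
    nlinarith [sq_nonneg (2*m*mu+c)]

private lemma lin_pos_of_rfun_lt {n : ℕ} (M C K : Matrix (Fin n) (Fin n) ℂ)
    (x : Fin n → ℂ) (mu : ℝ) (hm : 0 < qf M x)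
    (h : rfun M C K x < mu) : 0 < 2*mu*(qf M x) + qf C x := by
  set m := qf M x; set c := qf C x; set k := qf K x
  have h2 : -c/(2*m) < mu := by
    rw [rfun] at h
    split at h
    · next hD =>
      refine lt_of_le_of_lt ?_ h
      have hsn : 0 ≤ Real.sqrt (c^2-4*m*k) := Real.sqrt_nonneg _
      apply div_le_div_of_nonneg_right ?_ (by positivity)
      · linarith
    · exact h
  have := (div_lt_iff₀ (by positivity : (0:ℝ) < 2*m)).mp h2
  linarith

private lemma rfun_nonpos {n : ℕ} (M C K : Matrix (Fin n) (Fin n) ℂ)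
    (x : Fin n → ℂ) (hm : 0 < qf M x) (hc : 0 < qf C x) (hk : 0 < qf K x) :
    rfun M C K x ≤ 0 := by
  set m := qf M x; set c := qf C x; set k := qf K x
  rw [rfun]
  split
  · next hD =>
    apply div_nonpos_of_nonpos_of_nonneg ?_ (by positivity)
    have h1 : Real.sqrt (c^2-4*m*k) ≤ Real.sqrt (c^2) := Real.sqrt_le_sqrt (by nlinarith)
    rw [Real.sqrt_sq hc.le] at h1
    linarith
  · apply div_nonpos_of_nonpos_of_nonneg (by linarith) (by positivity)

/-! #### Matrix square root lemmas -/

variable {n : ℕ} {P : Matrix (Fin n) (Fin n) ℂ}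

private lemma msqrt_mul_self (hP : P.PosSemidef) : msqrt P * msqrt P = P := by
  rw [msqrt, dif_pos hP]
  have hU : (star hP.1.eigenvectorUnitary : Matrix (Fin n) (Fin n) ℂ) *
      (hP.1.eigenvectorUnitary : Matrix (Fin n) (Fin n) ℂ) = 1 :=
    Unitary.coe_star_mul_self _
  have hD : diagonal (((↑) ∘ (√·) ∘ hP.1.eigenvalues : Fin n → ℂ)) *
      diagonal (((↑) ∘ (√·) ∘ hP.1.eigenvalues : Fin n → ℂ))
      = diagonal (RCLike.ofReal ∘ hP.1.eigenvalues : Fin n → ℂ) := by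
    rw [diagonal_mul_diagonal]
    congr 1
    ext i
    simp only [Function.comp_apply]
    rw [← Complex.ofReal_mul, Real.mul_self_sqrt (hP.eigenvalues_nonneg i)]
    rfl
  conv_rhs => rw [hP.1.spectral_theorem, Unitary.conjStarAlgAut_apply]
  rw [← hD]
  simp only [Matrix.mul_assoc]
  rw [← Matrix.mul_assoc (star _ : Matrix (Fin n) (Fin n) ℂ) _ (diagonal _ * _), hU,
    Matrix.one_mul]

private lemma msqrt_herm (hP : P.PosSemidef) : (msqrt P).IsHermitian := by
  rw [msqrt, dif_pos hP]
  rw [star_eq_conjTranspose]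
  exact isHermitian_mul_mul_conjTranspose _
    (isHermitian_diagonal_of_self_adjoint _ (by ext i; simp [Complex.conj_ofReal]))

private lemma msqrt_det_isUnit (hP : P.PosDef) : IsUnit (msqrt P).det := by
  have h : (msqrt P).det * (msqrt P).det = P.det := by
    rw [← det_mul, msqrt_mul_self hP.posSemidef]
  have hd : P.det ≠ 0 := hP.det_pos.ne'
  have : (msqrt P).det ≠ 0 := fun h0 => hd (by rw [← h, h0, mul_zero])
  exact this.isUnit

private lemma msqrt_inv_herm (hP : P.PosDef) : ((msqrt P)⁻¹).IsHermitian := by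
  have := msqrt_herm hP.posSemidef
  rw [Matrix.IsHermitian, Matrix.conjTranspose_nonsing_inv, this]

private lemma msqrt_mul_inv (hP : P.PosDef) : msqrt P * (msqrt P)⁻¹ = 1 :=
  Matrix.mul_nonsing_inv _ (msqrt_det_isUnit hP)

private lemma msqrt_inv_mul (hP : P.PosDef) : (msqrt P)⁻¹ * msqrt P = 1 :=
  Matrix.nonsing_inv_mul _ (msqrt_det_isUnit hP)

/-! #### Hermitian quadratic form lemmas -/

private lemma herm_dot_im {m : Type*} [Fintype m] {A : Matrix m m ℂ} (hA : A.IsHermitian)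
    (x : m → ℂ) : (star x ⬝ᵥ A *ᵥ x).im = 0 := by
  have h : star (star x ⬝ᵥ A *ᵥ x) = star x ⬝ᵥ A *ᵥ x := by
    rw [← star_dotProduct_star, star_star, star_mulVec,
      ← Matrix.dotProduct_mulVec, hA.eq]
  have := congrArg Complex.im h
  simp only [Complex.star_def, Complex.conj_im] at this
  linarith

private lemma smul_real_herm {m : Type*} [Fintype m] {A : Matrix m m ℂ}
    (hA : A.IsHermitian) (r : ℝ) : ((r : ℂ) • A).IsHermitian := by
  have h : ((r : ℂ) • A)ᴴ = (r : ℂ) • Aᴴ := by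
    rw [Matrix.conjTranspose_smul]
    congr 1
    simp [Complex.star_def, Complex.conj_ofReal]
  rw [Matrix.IsHermitian, h, hA.eq]

private lemma dot_conj {m : Type*} [Fintype m] (W : Matrix m m ℂ) (a b : m → ℂ) :
    star (star a ⬝ᵥ W *ᵥ b) = star b ⬝ᵥ Wᴴ *ᵥ a := by
  rw [← star_dotProduct_star, star_star, star_mulVec, ← Matrix.dotProduct_mulVec]

/-! #### Block matrix algebra -/

private lemma L_mul_Linv (S R T : Matrix (Fin n) (Fin n) ℂ) (mu : ℂ)
    (hR : R * R⁻¹ = 1) (hT' : T⁻¹ * T = 1) :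
    (fromBlocks (R * T⁻¹) (0 : Matrix (Fin n) (Fin n) ℂ) (mu • (S * T⁻¹))
        (1 : Matrix (Fin n) (Fin n) ℂ)) *
      (fromBlocks (T * R⁻¹) (0 : Matrix (Fin n) (Fin n) ℂ) (-(mu • (S * R⁻¹)))
        (1 : Matrix (Fin n) (Fin n) ℂ)) = 1 := by
  rw [fromBlocks_multiply, ← fromBlocks_one, fromBlocks_inj]
  have key : R * T⁻¹ * (T * R⁻¹) = 1 := by
    rw [Matrix.mul_assoc, ← Matrix.mul_assoc T⁻¹ T R⁻¹, hT', Matrix.one_mul, hR]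
  have key2 : S * T⁻¹ * (T * R⁻¹) = S * R⁻¹ := by
    rw [Matrix.mul_assoc, ← Matrix.mul_assoc T⁻¹ T R⁻¹, hT', Matrix.one_mul]
  refine ⟨?_, ?_, ?_, ?_⟩
  · rw [Matrix.zero_mul, add_zero, key]
  · simp
  · rw [Matrix.one_mul, Matrix.smul_mul, key2]
    exact add_neg_cancel _
  · simp

private lemma Linv_mul_L (S R T : Matrix (Fin n) (Fin n) ℂ) (mu : ℂ)
    (hR' : R⁻¹ * R = 1) (hT : T * T⁻¹ = 1) :
    (fromBlocks (T * R⁻¹) (0 : Matrix (Fin n) (Fin n) ℂ) (-(mu • (S * R⁻¹)))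
        (1 : Matrix (Fin n) (Fin n) ℂ)) *
      (fromBlocks (R * T⁻¹) (0 : Matrix (Fin n) (Fin n) ℂ) (mu • (S * T⁻¹))
        (1 : Matrix (Fin n) (Fin n) ℂ)) = 1 := by
  rw [fromBlocks_multiply, ← fromBlocks_one, fromBlocks_inj]
  have key : T * R⁻¹ * (R * T⁻¹) = 1 := by
    rw [Matrix.mul_assoc, ← Matrix.mul_assoc R⁻¹ R T⁻¹, hR', Matrix.one_mul, hT]
  have key2 : S * R⁻¹ * (R * T⁻¹) = S * T⁻¹ := by
    rw [Matrix.mul_assoc, ← Matrix.mul_assoc R⁻¹ R T⁻¹, hR', Matrix.one_mul]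
  refine ⟨?_, ?_, ?_, ?_⟩
  · rw [Matrix.zero_mul, add_zero, key]
  · simp
  · rw [Matrix.one_mul, Matrix.neg_mul, Matrix.smul_mul, key2, neg_add_cancel]
  · simp

private lemma A_mul_L_eq_L_mul_B (S R T C : Matrix (Fin n) (Fin n) ℂ) (mu : ℂ)
    (hS : S⁻¹ * S = 1) (hS' : S * S⁻¹ = 1) (hT' : T⁻¹ * T = 1) (hT : T * T⁻¹ = 1)
    (hTT : T * T = mu ^ 2 • (S * S) + mu • C + R * R) :
    (fromBlocks (0 : Matrix (Fin n) (Fin n) ℂ) (R * S⁻¹) (-(S⁻¹ * R)) (-(S⁻¹ * C * S⁻¹))) *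
      (fromBlocks (R * T⁻¹) (0 : Matrix (Fin n) (Fin n) ℂ) (mu • (S * T⁻¹))
        (1 : Matrix (Fin n) (Fin n) ℂ)) =
    (fromBlocks (R * T⁻¹) (0 : Matrix (Fin n) (Fin n) ℂ) (mu • (S * T⁻¹))
        (1 : Matrix (Fin n) (Fin n) ℂ)) *
      (fromBlocks (mu • (1 : Matrix (Fin n) (Fin n) ℂ)) (T * S⁻¹) (-(S⁻¹ * T))
        (-(mu • (1 : Matrix (Fin n) (Fin n) ℂ)) - S⁻¹ * C * S⁻¹)) := by
  have cS : ∀ X : Matrix (Fin n) (Fin n) ℂ, S⁻¹ * (S * X) = X := fun X => by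
    rw [← Matrix.mul_assoc, hS, Matrix.one_mul]
  have cS' : ∀ X : Matrix (Fin n) (Fin n) ℂ, S * (S⁻¹ * X) = X := fun X => by
    rw [← Matrix.mul_assoc, hS', Matrix.one_mul]
  have cT : ∀ X : Matrix (Fin n) (Fin n) ℂ, T⁻¹ * (T * X) = X := fun X => by
    rw [← Matrix.mul_assoc, hT', Matrix.one_mul]
  have hST : S⁻¹ * T = mu ^ 2 • (S * T⁻¹) + mu • (S⁻¹ * (C * T⁻¹)) + S⁻¹ * (R * (R * T⁻¹)) := by
    have h1 : S⁻¹ * T = S⁻¹ * ((T * T) * T⁻¹) := by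
      rw [Matrix.mul_assoc T T T⁻¹, hT, Matrix.mul_one]
    rw [h1, hTT]
    simp only [Matrix.add_mul, Matrix.mul_add, Matrix.smul_mul, Matrix.mul_smul,
      Matrix.mul_assoc, cS]
  rw [fromBlocks_multiply, fromBlocks_multiply, fromBlocks_inj]
  refine ⟨?_, ?_, ?_, ?_⟩
  · simp only [Matrix.zero_mul, zero_add, add_zero, Matrix.mul_smul, Matrix.mul_one,
      Matrix.mul_assoc, cS]
  · simp only [Matrix.zero_mul, zero_add, add_zero, Matrix.mul_one, Matrix.mul_assoc, cT]
  · simp only [Matrix.neg_mul, Matrix.mul_neg, Matrix.one_mul, Matrix.mul_one,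
      Matrix.smul_mul, Matrix.mul_smul, smul_smul, Matrix.mul_assoc, cS, hST]
    module
  · simp only [Matrix.mul_zero, Matrix.mul_one, Matrix.one_mul, zero_add, Matrix.smul_mul,
      Matrix.mul_smul, Matrix.mul_assoc, cT, cS', Matrix.mul_neg, Matrix.neg_mul]
    rw [hS']
    module

/-! #### Numerical range bound for the transformed matrix -/

private lemma Bp_qf_le (S T C : Matrix (Fin n) (Fin n) ℂ) (mu : ℝ)
    (hW : (T * S⁻¹)ᴴ = S⁻¹ * T)
    (hpsd : (S⁻¹ * C * S⁻¹ + (((2*mu : ℝ)) : ℂ) • (1 : Matrix (Fin n) (Fin n) ℂ)).PosSemidef)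
    (x : (Fin n ⊕ Fin n) → ℂ) :
    (star x ⬝ᵥ (fromBlocks ((mu : ℂ) • (1 : Matrix (Fin n) (Fin n) ℂ)) (T * S⁻¹) (-(S⁻¹ * T))
        (-((mu : ℂ) • (1 : Matrix (Fin n) (Fin n) ℂ)) - S⁻¹ * C * S⁻¹)) *ᵥ x).re
      ≤ mu * (star x ⬝ᵥ x).re := by
  set x₁ : Fin n → ℂ := x ∘ Sum.inl with hx1
  set x₂ : Fin n → ℂ := x ∘ Sum.inr with hx2
  have hx : star x = Sum.elim (star x₁) (star x₂) := by
    ext i; cases i <;> rfl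
  have hxx : x = Sum.elim x₁ x₂ := by ext i; cases i <;> rfl
  have hcross : (star x₂ ⬝ᵥ (S⁻¹ * T) *ᵥ x₁).re = (star x₁ ⬝ᵥ (T * S⁻¹) *ᵥ x₂).re := by
    have h := dot_conj (T * S⁻¹) x₁ x₂
    rw [hW] at h
    rw [← h, Complex.star_def, Complex.conj_re]
  have hp : 0 ≤ ((star x₂ ⬝ᵥ (S⁻¹ * C * S⁻¹) *ᵥ x₂).re + (2*mu) * (star x₂ ⬝ᵥ x₂).re) := by
    have h0 := hpsd.re_dotProduct_nonneg x₂
    simp only [RCLike.re_to_complex, Matrix.add_mulVec, Matrix.smul_mulVec,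
      Matrix.one_mulVec, dotProduct_add, dotProduct_smul, smul_eq_mul, Complex.add_re,
      Complex.re_ofReal_mul] at h0
    exact h0
  have hsplit : star x ⬝ᵥ x = star x₁ ⬝ᵥ x₁ + star x₂ ⬝ᵥ x₂ := by
    conv_lhs => rw [hx, hxx]
    rw [sumElim_dotProduct_sumElim]
  conv_lhs => rw [fromBlocks_mulVec, hx, sumElim_dotProduct_sumElim]
  rw [hsplit]
  simp only [Matrix.add_mulVec, Matrix.sub_mulVec, Matrix.neg_mulVec, Matrix.smul_mulVec,
    Matrix.one_mulVec, dotProduct_add, dotProduct_sub, dotProduct_neg, dotProduct_smul,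
    smul_eq_mul, Complex.add_re, Complex.sub_re, Complex.neg_re, Complex.re_ofReal_mul,
    Complex.add_re]
  rw [hcross]
  ring_nf
  nlinarith [hp]

/-! #### The abstract semigroup estimate -/

private lemma hasDerivAt_comp_ofReal' {F : Type*} [NormedAddCommGroup F] [NormedSpace ℂ F]
    {e : ℂ → F} {e' : F} {s : ℝ} (hf : HasDerivAt e e' (s : ℂ)) :
    HasDerivAt (fun y : ℝ => e (y : ℂ)) e' s := by
  simpa [Function.comp_def] using HasDerivAt.scomp (𝕜 := ℝ) s hf Complex.ofRealCLM.hasDerivAt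

private lemma exp_norm_le_of_dissipative {E : Type*} [NormedAddCommGroup E]
    [InnerProductSpace ℂ E] [CompleteSpace E] (B : E →L[ℂ] E) (mu : ℝ)
    (hB : ∀ v : E, (⟪v, B v⟫_ℂ).re ≤ mu * ‖v‖^2) {t : ℝ} (ht : 0 ≤ t) :
    ‖NormedSpace.exp ((t:ℂ) • B)‖ ≤ Real.exp (mu * t) := by
  refine ContinuousLinearMap.opNorm_le_bound _ (Real.exp_nonneg _) fun v => ?_
  set u : ℝ → E := fun s => NormedSpace.exp ((s:ℂ) • B) v with hu_def
  have hu : ∀ s : ℝ, HasDerivAt u (B (u s)) s := by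
    intro s
    have h1 : HasDerivAt (fun z : ℂ => NormedSpace.exp (z • B))
        (B * NormedSpace.exp ((s:ℂ) • B)) (s:ℂ) := hasDerivAt_exp_smul_const' B (s:ℂ)
    have h2 : HasDerivAt (fun y : ℝ => NormedSpace.exp ((y:ℂ) • B))
        (B * NormedSpace.exp ((s:ℂ) • B)) s := hasDerivAt_comp_ofReal' h1
    have h3 := ((ContinuousLinearMap.apply ℂ E v).hasFDerivAt.restrictScalars
      ℝ).comp_hasDerivAt s h2
    simpa [ContinuousLinearMap.mul_apply, Function.comp_def, hu_def] using h3
  have hnorm : ∀ s, ‖u s‖^2 = (⟪u s, u s⟫_ℂ).re := by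
    intro s
    rw [← RCLike.re_to_complex, inner_self_eq_norm_sq (𝕜 := ℂ)]
  set g : ℝ → ℝ := fun s => (⟪u s, u s⟫_ℂ).re * Real.exp (-(2*mu)*s) with hg_def
  have hg : ∀ s, HasDerivAt g ((2 * (⟪u s, B (u s)⟫_ℂ).re
      + (⟪u s, u s⟫_ℂ).re * (-(2*mu))) * Real.exp (-(2*mu)*s)) s := by
    intro s
    have hinner : HasDerivAt (fun s => ⟪u s, u s⟫_ℂ)
        (⟪u s, B (u s)⟫_ℂ + ⟪B (u s), u s⟫_ℂ) s := (hu s).inner ℂ (hu s)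
    have hre : HasDerivAt (fun s => (⟪u s, u s⟫_ℂ).re)
        (2 * (⟪u s, B (u s)⟫_ℂ).re) s := by
      have := Complex.reCLM.hasFDerivAt.comp_hasDerivAt s hinner
      have heq : (⟪u s, B (u s)⟫_ℂ + ⟪B (u s), u s⟫_ℂ).re
          = 2 * (⟪u s, B (u s)⟫_ℂ).re := by
        have hc : (⟪B (u s), u s⟫_ℂ) = starRingEnd ℂ ⟪u s, B (u s)⟫_ℂ :=
          (inner_conj_symm _ _).symm
        rw [Complex.add_re, hc, Complex.conj_re]
        ring
      simpa [heq, Function.comp_def] using this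
    have hexp : HasDerivAt (fun s : ℝ => Real.exp (-(2*mu)*s))
        (Real.exp (-(2*mu)*s) * (-(2*mu))) s := by
      have h0 : HasDerivAt (fun s : ℝ => -(2*mu)*s) (-(2*mu)) s := by
        simpa using (hasDerivAt_id s).const_mul (-(2*mu))
      simpa using h0.exp
    have := hre.mul hexp
    refine this.congr_deriv ?_
    ring
  have hg' : ∀ s, deriv g s ≤ 0 := by
    intro s
    rw [(hg s).deriv]
    apply mul_nonpos_of_nonpos_of_nonneg _ (Real.exp_nonneg _)
    have h1 := hB (u s)
    rw [hnorm s] at h1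
    linarith
  have hmono : Antitone g :=
    antitone_of_deriv_nonpos (fun s => (hg s).differentiableAt) hg'
  have hg0 : g 0 = ‖v‖^2 := by
    have hu0 : u 0 = v := by
      simp [hu_def, NormedSpace.exp_zero]
    have h0 := hnorm 0
    rw [hu0] at h0
    simp [hg_def, hu0, ← h0]
    rw [← Complex.ofReal_pow, Complex.ofReal_re]
  have hgt := hmono ht
  rw [hg0] at hgt
  have hsq : ‖u t‖^2 ≤ (Real.exp (mu*t) * ‖v‖)^2 := by
    have hE : Real.exp (-(2*mu)*t) * (Real.exp (mu*t) * Real.exp (mu*t)) = 1 := by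
      rw [← Real.exp_add, ← Real.exp_add, ← Real.exp_zero]
      ring_nf
    have hE1 : (0:ℝ) < Real.exp (-(2*mu)*t) := Real.exp_pos _
    have hE2 : (0:ℝ) < Real.exp (mu*t) := Real.exp_pos _
    have h3 : ‖u t‖^2 * Real.exp (-(2*mu)*t) ≤ ‖v‖^2 := by rw [hnorm t]; exact hgt
    nlinarith [sq_nonneg (‖u t‖), sq_nonneg ‖v‖]
  calc ‖NormedSpace.exp ((t:ℂ) • B) v‖ = ‖u t‖ := rfl
    _ ≤ Real.exp (mu*t) * ‖v‖ := by
        have h1 : (0:ℝ) ≤ ‖u t‖ := norm_nonneg _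
        have h2 : (0:ℝ) ≤ Real.exp (mu*t) * ‖v‖ := by positivity
        nlinarith

/-! #### Bridging matrices and Euclidean operators -/

private lemma inner_toEuclideanCLM {m : Type*} [Fintype m] [DecidableEq m]
    (A : Matrix m m ℂ) (v : EuclideanSpace ℂ m) :
    ⟪v, toEuclideanCLM (𝕜 := ℂ) A v⟫_ℂ
      = star (WithLp.equiv 2 (m → ℂ) v) ⬝ᵥ A *ᵥ (WithLp.equiv 2 (m → ℂ) v) := by
  show _ = star (WithLp.ofLp v) ⬝ᵥ A *ᵥ WithLp.ofLp v
  rw [EuclideanSpace.inner_eq_star_dotProduct, dotProduct_comm, ofLp_toEuclideanCLM]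

private lemma norm_sq_euclidean {m : Type*} [Fintype m] [DecidableEq m]
    (v : EuclideanSpace ℂ m) :
    ‖v‖^2 = (star (WithLp.equiv 2 (m → ℂ) v) ⬝ᵥ (WithLp.equiv 2 (m → ℂ) v)).re := by
  show ‖v‖^2 = (star (WithLp.ofLp v) ⬝ᵥ WithLp.ofLp v).re
  rw [dotProduct_comm, ← RCLike.re_to_complex, ← EuclideanSpace.inner_eq_star_dotProduct,
    inner_self_eq_norm_sq (𝕜 := ℂ)]

end Aux

/-- The decay estimate `‖exp(tA)‖ ≤ ‖L(μ)‖ ‖L(μ)⁻¹‖ e^{μt}` for `γ < μ ≤ 0`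
and `t ≥ 0`. -/
theorem decay_estimate {n : ℕ} (hn : 1 ≤ n)
    (M C K : Matrix (Fin n) (Fin n) ℂ)
    (hM : M.PosDef) (hC : C.PosDef) (hK : K.PosDef) :
    ∀ mu : ℝ, gam M C K < mu → mu ≤ 0 → ∀ t : ℝ, 0 ≤ t →
      opNorm (NormedSpace.exp ((t : ℂ) • phaseA M C K)) ≤
        opNorm (Lmat M C K mu) * opNorm ((Lmat M C K mu)⁻¹) * Real.exp (mu * t) := by
  intro mu hgam hmu0 t ht
  open scoped Matrix.Norms.L2Operator in
  open scoped InnerProductSpace in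
  -- positivity of the scalar quadratic forms
  have hqfM : ∀ x : Fin n → ℂ, x ≠ 0 → 0 < qf M x := fun x hx => by
    have := hM.re_dotProduct_pos hx; simpa [qf] using this
  have hqfC : ∀ x : Fin n → ℂ, x ≠ 0 → 0 < qf C x := fun x hx => by
    have := hC.re_dotProduct_pos hx; simpa [qf] using this
  have hqfK : ∀ x : Fin n → ℂ, x ≠ 0 → 0 < qf K x := fun x hx => by
    have := hK.re_dotProduct_pos hx; simpa [qf] using this
  have hbdd : BddAbove {y : ℝ | ∃ x : Fin n → ℂ, x ≠ 0 ∧ rfun M C K x = y} := by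
    refine ⟨0, ?_⟩
    rintro y ⟨x, hx, rfl⟩
    exact rfun_nonpos M C K x (hqfM x hx) (hqfC x hx) (hqfK x hx)
  have hrlt : ∀ x : Fin n → ℂ, x ≠ 0 → rfun M C K x < mu := fun x hx =>
    lt_of_le_of_lt (le_csSup hbdd ⟨x, hx, rfl⟩) hgam
  -- the pencil at mu is positive definite
  set Q : Matrix (Fin n) (Fin n) ℂ := Kpen M C K (mu : ℂ) with hQ0
  have hQherm : Q.IsHermitian := by
    have h1 : (((mu:ℂ))^2 • M).IsHermitian := by
      rw [show ((mu:ℂ)^2) = (((mu^2 : ℝ)) : ℂ) by push_cast; ring]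
      exact smul_real_herm hM.1 _
    have h2 : ((mu:ℂ) • C).IsHermitian := smul_real_herm hC.1 mu
    exact (h1.add h2).add hK.1
  have hQqf : ∀ x : Fin n → ℂ, star x ⬝ᵥ Q *ᵥ x
      = (mu:ℂ)^2 * (star x ⬝ᵥ M *ᵥ x) + (mu:ℂ) * (star x ⬝ᵥ C *ᵥ x) + star x ⬝ᵥ K *ᵥ x := by
    intro x
    rw [hQ0, Kpen]
    simp only [Matrix.add_mulVec, Matrix.smul_mulVec, dotProduct_add,
      dotProduct_smul, smul_eq_mul]
  have hQ : Q.PosDef := by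
    refine PosDef.of_dotProduct_mulVec_pos hQherm (fun x hx => ?_)
    rw [RCLike.pos_iff]
    constructor
    · simp only [RCLike.re_to_complex]
      rw [hQqf]
      have hre : ((mu:ℂ)^2 * (star x ⬝ᵥ M *ᵥ x) + (mu:ℂ) * (star x ⬝ᵥ C *ᵥ x)
          + star x ⬝ᵥ K *ᵥ x).re
          = mu^2 * qf M x + mu * qf C x + qf K x := by
        simp only [qf, Complex.add_re, ← Complex.ofReal_pow, Complex.re_ofReal_mul]
      rw [hre]
      exact quad_pos_of_rfun_lt M C K x mu (hqfM x hx) (hqfK x hx) (hrlt x hx)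
    · simp only [RCLike.im_to_complex]
      exact herm_dot_im hQherm x
  -- square roots
  set S : Matrix (Fin n) (Fin n) ℂ := msqrt M with hS0
  set R : Matrix (Fin n) (Fin n) ℂ := msqrt K with hR0
  set T : Matrix (Fin n) (Fin n) ℂ := msqrt Q with hT0
  have hSS : S * S = M := msqrt_mul_self hM.posSemidef
  have hRR : R * R = K := msqrt_mul_self hK.posSemidef
  have hTT0 : T * T = Q := msqrt_mul_self hQ.posSemidef
  have hSinv : S * S⁻¹ = 1 := msqrt_mul_inv hM
  have hSinv' : S⁻¹ * S = 1 := msqrt_inv_mul hM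
  have hRinv : R * R⁻¹ = 1 := msqrt_mul_inv hK
  have hRinv' : R⁻¹ * R = 1 := msqrt_inv_mul hK
  have hTinv : T * T⁻¹ = 1 := msqrt_mul_inv hQ
  have hTinv' : T⁻¹ * T = 1 := msqrt_inv_mul hQ
  have hTT : T * T = ((mu:ℂ))^2 • (S * S) + (mu:ℂ) • C + R * R := by
    rw [hSS, hRR, hTT0, hQ0, Kpen]
  -- the matrices
  set Linv : Matrix (Fin n ⊕ Fin n) (Fin n ⊕ Fin n) ℂ :=
    fromBlocks (T * R⁻¹) (0 : Matrix (Fin n) (Fin n) ℂ) (-((mu:ℂ) • (S * R⁻¹)))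
      (1 : Matrix (Fin n) (Fin n) ℂ) with hLinv0
  set Bp : Matrix (Fin n ⊕ Fin n) (Fin n ⊕ Fin n) ℂ :=
    fromBlocks ((mu:ℂ) • (1 : Matrix (Fin n) (Fin n) ℂ)) (T * S⁻¹) (-(S⁻¹ * T))
      (-((mu:ℂ) • (1 : Matrix (Fin n) (Fin n) ℂ)) - S⁻¹ * C * S⁻¹) with hBp0
  have hL : Lmat M C K mu = fromBlocks (R * T⁻¹) (0 : Matrix (Fin n) (Fin n) ℂ)
      ((mu:ℂ) • (S * T⁻¹)) (1 : Matrix (Fin n) (Fin n) ℂ) := rfl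
  have hA : phaseA M C K = fromBlocks (0 : Matrix (Fin n) (Fin n) ℂ) (R * S⁻¹)
      (-(S⁻¹ * R)) (-(S⁻¹ * C * S⁻¹)) := rfl
  have h1 : Lmat M C K mu * Linv = 1 := by
    rw [hL, hLinv0]; exact L_mul_Linv S R T (mu:ℂ) hRinv hTinv'
  have h2 : Linv * Lmat M C K mu = 1 := by
    rw [hL, hLinv0]; exact Linv_mul_L S R T (mu:ℂ) hRinv' hTinv
  have hAL : phaseA M C K * Lmat M C K mu = Lmat M C K mu * Bp := by
    rw [hA, hL, hBp0]
    exact A_mul_L_eq_L_mul_B S R T C (mu:ℂ) hSinv' hSinv hTinv' hTinv hTT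
  have hAeq : phaseA M C K = Lmat M C K mu * Bp * Linv := by
    calc phaseA M C K = phaseA M C K * 1 := by rw [Matrix.mul_one]
      _ = phaseA M C K * (Lmat M C K mu * Linv) := by rw [h1]
      _ = (phaseA M C K * Lmat M C K mu) * Linv := by rw [Matrix.mul_assoc]
      _ = Lmat M C K mu * Bp * Linv := by rw [hAL]
  -- the exponential conjugation
  set Lu : (Matrix (Fin n ⊕ Fin n) (Fin n ⊕ Fin n) ℂ)ˣ :=
    ⟨Lmat M C K mu, Linv, h1, h2⟩ with hLu0
  have hexp_eq : NormedSpace.exp ((t:ℂ) • phaseA M C K)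
      = Lmat M C K mu * NormedSpace.exp ((t:ℂ) • Bp) * Linv := by
    have hsm : (t:ℂ) • phaseA M C K = Lmat M C K mu * ((t:ℂ) • Bp) * Linv := by
      rw [hAeq, Matrix.mul_smul, Matrix.smul_mul]
    rw [hsm]
    exact Matrix.exp_units_conj Lu ((t:ℂ) • Bp)
  -- dissipativity of Bp
  have hSinvH : (S⁻¹)ᴴ = S⁻¹ := msqrt_inv_herm hM
  have hTH : Tᴴ = T := msqrt_herm hQ.posSemidef
  have hW : (T * S⁻¹)ᴴ = S⁻¹ * T := by
    rw [Matrix.conjTranspose_mul, hSinvH, hTH]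
  have hSM : S⁻¹ * M = S := by
    rw [← hSS, ← Matrix.mul_assoc, hSinv', Matrix.one_mul]
  have hCM : (C + ((2*mu : ℝ) : ℂ) • M).PosDef := by
    refine PosDef.of_dotProduct_mulVec_pos (hC.1.add (smul_real_herm hM.1 _)) (fun x hx => ?_)
    rw [RCLike.pos_iff]
    constructor
    · simp only [RCLike.re_to_complex, Matrix.add_mulVec, Matrix.smul_mulVec,
        dotProduct_add, dotProduct_smul, smul_eq_mul, Complex.add_re, Complex.re_ofReal_mul]
      have := lin_pos_of_rfun_lt M C K x mu (hqfM x hx) (hrlt x hx)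
      simp only [qf] at this ⊢
      linarith
    · simp only [RCLike.im_to_complex]
      exact herm_dot_im (hC.1.add (smul_real_herm hM.1 _)) x
  have hpsd : (S⁻¹ * C * S⁻¹ + ((2*mu : ℝ) : ℂ) • (1 : Matrix (Fin n) (Fin n) ℂ)).PosSemidef := by
    have hcong := hCM.posSemidef.conjTranspose_mul_mul_same (B := S⁻¹)
    have heq : (S⁻¹)ᴴ * (C + ((2*mu : ℝ) : ℂ) • M) * S⁻¹
        = S⁻¹ * C * S⁻¹ + ((2*mu : ℝ) : ℂ) • (1 : Matrix (Fin n) (Fin n) ℂ) := by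
      rw [hSinvH, Matrix.mul_add, Matrix.add_mul, Matrix.mul_smul, Matrix.smul_mul, hSM, hSinv]
    rwa [heq] at hcong
  have hBdiss : ∀ v : EuclideanSpace ℂ (Fin n ⊕ Fin n),
      (⟪v, (toEuclideanCLM (𝕜 := ℂ) Bp) v⟫_ℂ).re ≤ mu * ‖v‖^2 := by
    intro v
    rw [_root_.inner_toEuclideanCLM, norm_sq_euclidean, hBp0]
    exact Bp_qf_le S T C mu hW hpsd _
  -- continuity of the algebra equivalence
  have hcont : Continuous (toEuclideanCLM (𝕜 := ℂ) (n := Fin n ⊕ Fin n)) := by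
    let φ : Matrix (Fin n ⊕ Fin n) (Fin n ⊕ Fin n) ℂ →ₗ[ℂ]
        (EuclideanSpace ℂ (Fin n ⊕ Fin n) →L[ℂ] EuclideanSpace ℂ (Fin n ⊕ Fin n)) :=
      { toFun := toEuclideanCLM (𝕜 := ℂ)
        map_add' := map_add _
        map_smul' := map_smul _ }
    exact φ.continuous_of_finiteDimensional
  have hexp_map : toEuclideanCLM (𝕜 := ℂ) (NormedSpace.exp ((t:ℂ) • Bp))
      = NormedSpace.exp ((t:ℂ) • toEuclideanCLM (𝕜 := ℂ) Bp) := by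
    rw [NormedSpace.map_exp_of_mem_ball (𝕂 := ℂ) _ hcont _
      ((NormedSpace.expSeries_radius_eq_top ℂ (Matrix (Fin n ⊕ Fin n) (Fin n ⊕ Fin n) ℂ)).symm ▸ edist_lt_top _ _), _root_.map_smul]
  have hEbound : ‖NormedSpace.exp ((t:ℂ) • Bp)‖ ≤ Real.exp (mu * t) := by
    rw [Matrix.cstar_norm_def, hexp_map]
    exact exp_norm_le_of_dissipative _ mu hBdiss ht
  -- assemble
  have hLinv_eq : (Lmat M C K mu)⁻¹ = Linv := Matrix.inv_eq_right_inv h1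
  show ‖NormedSpace.exp ((t:ℂ) • phaseA M C K)‖
      ≤ ‖Lmat M C K mu‖ * ‖(Lmat M C K mu)⁻¹‖ * Real.exp (mu * t)
  rw [hexp_eq, hLinv_eq]
  have hstep1 : ‖Lmat M C K mu * NormedSpace.exp ((t:ℂ) • Bp) * Linv‖
      ≤ ‖Lmat M C K mu‖ * ‖NormedSpace.exp ((t:ℂ) • Bp)‖ * ‖Linv‖ := by
    calc ‖Lmat M C K mu * NormedSpace.exp ((t:ℂ) • Bp) * Linv‖
        ≤ ‖Lmat M C K mu * NormedSpace.exp ((t:ℂ) • Bp)‖ * ‖Linv‖ :=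
          Matrix.l2_opNorm_mul _ _
      _ ≤ ‖Lmat M C K mu‖ * ‖NormedSpace.exp ((t:ℂ) • Bp)‖ * ‖Linv‖ := by
          apply mul_le_mul_of_nonneg_right (Matrix.l2_opNorm_mul _ _) (norm_nonneg _)
  refine le_trans hstep1 ?_
  have hnn1 : (0:ℝ) ≤ ‖Lmat M C K mu‖ := norm_nonneg _
  have hnn2 : (0:ℝ) ≤ ‖Linv‖ := norm_nonneg _
  calc ‖Lmat M C K mu‖ * ‖NormedSpace.exp ((t:ℂ) • Bp)‖ * ‖Linv‖
      ≤ ‖Lmat M C K mu‖ * Real.exp (mu * t) * ‖Linv‖ := by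
        apply mul_le_mul_of_nonneg_right _ hnn2
        exact mul_le_mul_of_nonneg_left hEbound hnn1
    _ = ‖Lmat M C K mu‖ * ‖Linv‖ * Real.exp (mu * t) := by ring

end
end
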